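/- Let G be a group, let N ≤ M be normal subgroups of G, and let W ≤ Z be subgroups of G satisfying N ⊓ W = N ⊓ Z and M ⊔ W = M ⊔ Z. Then the map ρ(H) = (N ⊔ H) ⊓ M is an order isomorphism from the interval {H : W ≤ H ≤ Z} of the subgroup lattice of G onto the poset {K : ρ(W) ≤ K ≤ ρ(Z) and W ≤ N_G(K)} ordered by inclusion, with order-preserving inverse φ(K) = (W ⊔ K) ⊓ Z. -/

import Mathlib

open Pointwise

/-- If `W` normalizes `K`, then every element of `W ⊔ K` is a product `w * k`. -/
lemma mem_sup_of_le_normalizer {G : Type*} [Group G] {W K : Subgroup G}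
    (h : W ≤ Subgroup.normalizer (K : Set G)) {x : G} :
    x ∈ W ⊔ K ↔ ∃ w ∈ W, ∃ k ∈ K, w * k = x := by
  have conj : ∀ w ∈ W, ∀ k ∈ K, w * k * w⁻¹ ∈ K := by
    intro w hw k hk
    exact (Subgroup.mem_normalizer_iff.mp (h hw) k).mp hk
  let P : Subgroup G :=
    { carrier := (W : Set G) * (K : Set G)
      one_mem' := ⟨1, W.one_mem, 1, K.one_mem, mul_one 1⟩
      mul_mem' := by
        rintro a b ⟨w, hw, k, hk, rfl⟩ ⟨w', hw', k', hk', rfl⟩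
        refine ⟨w * w', W.mul_mem hw hw', (w'⁻¹ * k * w') * k',
          K.mul_mem ?_ hk', by group⟩
        simpa using conj w'⁻¹ (W.inv_mem hw') k hk
      inv_mem' := by
        rintro a ⟨w, hw, k, hk, rfl⟩
        exact ⟨w⁻¹, W.inv_mem hw, w * k⁻¹ * w⁻¹, conj w hw k⁻¹ (K.inv_mem hk),
          by group⟩ }
  constructor
  · intro hx
    have hle : W ⊔ K ≤ P := by
      refine sup_le (fun w hw => ⟨w, hw, 1, K.one_mem, mul_one w⟩)
        (fun k hk => ⟨1, W.one_mem, k, hk, one_mul k⟩)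
    exact Set.mem_mul.mp (hle hx)
  · rintro ⟨w, hw, k, hk, rfl⟩
    exact mul_mem (le_sup_left (a := W) (b := K) hw) (le_sup_right (a := W) (b := K) hk)

/-- Let `N ≤ M` be normal subgroups of `G`, and `W ≤ Z` subgroups with
`N ⊓ W = N ⊓ Z` and `M ⊔ W = M ⊔ Z`.  The projection `ρ(H) = (N ⊔ H) ⊓ M`
is an order isomorphism from the interval `[W, Z]` of the subgroup lattice
onto the poset of subgroups `K` with `ρ(W) ≤ K ≤ ρ(Z)` normalized by `W`,
with inverse `φ(K) = (W ⊔ K) ⊓ Z`. -/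
theorem projection_orderIso {G : Type*} [Group G]
    (N M : Subgroup G) (hN : N.Normal) (hM : M.Normal) (hNM : N ≤ M)
    (W Z : Subgroup G) (hWZ : W ≤ Z)
    (hmeet : N ⊓ W = N ⊓ Z) (hjoin : M ⊔ W = M ⊔ Z) :
    ∃ e : {H : Subgroup G // W ≤ H ∧ H ≤ Z} ≃o
        {K : Subgroup G // (N ⊔ W) ⊓ M ≤ K ∧ K ≤ (N ⊔ Z) ⊓ M ∧ W ≤ Subgroup.normalizer (K : Set G)},
      (∀ H : {H : Subgroup G // W ≤ H ∧ H ≤ Z}, (e H : Subgroup G) = (N ⊔ (H : Subgroup G)) ⊓ M) ∧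
      (∀ K : {K : Subgroup G // (N ⊔ W) ⊓ M ≤ K ∧ K ≤ (N ⊔ Z) ⊓ M ∧ W ≤ Subgroup.normalizer (K : Set G)},
        (e.symm K : Subgroup G) = (W ⊔ (K : Subgroup G)) ⊓ Z) := by
  -- membership in `N ⊔ H` for `N` normal
  haveI := hN
  have hNmul : ∀ (H : Subgroup G) (x : G), x ∈ N ⊔ H ↔ ∃ n ∈ N, ∃ h ∈ H, n * h = x := by
    intro H x
    rw [← SetLike.mem_coe, Subgroup.normal_mul]
    exact Set.mem_mul
  -- every element of `Z` factors as `m * w`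
  have hMW : ∀ z ∈ Z, ∃ m ∈ M, ∃ w ∈ W, m * w = z := by
    intro z hz
    have hz' : z ∈ M ⊔ W := by
      rw [hjoin]; exact le_sup_right (a := M) hz
    haveI := hM
    rw [← SetLike.mem_coe, Subgroup.normal_mul] at hz'
    exact Set.mem_mul.mp hz'
  -- `H` normalizes `(N ⊔ H) ⊓ M` when elements come from `H`
  have conjρ : ∀ (H : Subgroup G), ∀ w ∈ H, ∀ g ∈ (N ⊔ H) ⊓ M, w * g * w⁻¹ ∈ (N ⊔ H) ⊓ M := by
    intro H w hw g hg
    obtain ⟨hg1, hg2⟩ := hg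
    obtain ⟨n, hn, h, hh, rfl⟩ := (hNmul H _).mp hg1
    refine ⟨?_, hM.conj_mem _ hg2 w⟩
    refine (hNmul H _).mpr ⟨w * n * w⁻¹, hN.conj_mem n hn w, w * h * w⁻¹,
      by exact H.mul_mem (H.mul_mem hw hh) (H.inv_mem hw), by group⟩
  have hnorm : ∀ (H : Subgroup G), W ≤ H → W ≤ Subgroup.normalizer ((((N ⊔ H) ⊓ M : Subgroup G)) : Set G) := by
    intro H hWH w hw
    rw [Subgroup.mem_normalizer_iff]
    intro g
    constructor
    · intro hg; exact conjρ H w (hWH hw) g hg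
    · intro hg
      have := conjρ H w⁻¹ (H.inv_mem (hWH hw)) _ hg
      simpa [mul_assoc] using this
  -- φ ∘ ρ = id on the interval [W, Z]
  have hA : ∀ (H : Subgroup G), W ≤ H → H ≤ Z → (W ⊔ ((N ⊔ H) ⊓ M)) ⊓ Z = H := by
    intro H hWH hHZ
    apply le_antisymm
    · rintro x ⟨hx1, hxZ⟩
      obtain ⟨w, hw, k, hk, rfl⟩ := (mem_sup_of_le_normalizer (hnorm H hWH)).mp hx1
      obtain ⟨n, hn, h, hh, rfl⟩ := (hNmul H _).mp hk.1
      have hnZ : n ∈ Z := by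
        have : w⁻¹ * (w * (n * h)) * h⁻¹ ∈ Z :=
          Z.mul_mem (Z.mul_mem (Z.inv_mem (hWZ hw)) hxZ) (Z.inv_mem (hHZ hh))
        simpa [mul_assoc] using this
      have hnW : n ∈ W := by
        have : n ∈ N ⊓ W := by rw [hmeet]; exact ⟨hn, hnZ⟩
        exact this.2
      exact H.mul_mem (hWH hw) (H.mul_mem (hWH hnW) hh)
    · intro h hh
      obtain ⟨m, hm, w, hw, rfl⟩ := hMW h (hHZ hh)
      refine ⟨?_, hHZ hh⟩
      have hmH : m ∈ H := by
        have : (m * w) * w⁻¹ ∈ H := H.mul_mem hh (H.inv_mem (hWH hw))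
        simpa using this
      exact Subgroup.mul_mem _
        (le_sup_right (a := W) ⟨le_sup_right (a := N) hmH, hm⟩)
        (le_sup_left (b := (N ⊔ H) ⊓ M) hw)
  -- ρ ∘ φ = id on the target
  have hB : ∀ (K : Subgroup G), (N ⊔ W) ⊓ M ≤ K → K ≤ (N ⊔ Z) ⊓ M → W ≤ Subgroup.normalizer (K : Set G) →
      (N ⊔ ((W ⊔ K) ⊓ Z)) ⊓ M = K := by
    intro K hK1 hK2 hWnK
    have hNK : N ≤ K := fun n hn => hK1 ⟨le_sup_left (b := W) hn, hNM hn⟩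
    have hKM : K ≤ M := fun k hk => (hK2 hk).2
    apply le_antisymm
    · rintro x ⟨hx1, hxM⟩
      obtain ⟨n, hn, y, hy, rfl⟩ := (hNmul _ _).mp hx1
      obtain ⟨w, hw, k, hk, rfl⟩ := (mem_sup_of_le_normalizer hWnK).mp hy.1
      have hwM : w ∈ M := by
        have : n⁻¹ * (n * (w * k)) * k⁻¹ ∈ M :=
          M.mul_mem (M.mul_mem (M.inv_mem (hNM hn)) hxM) (M.inv_mem (hKM hk))
        simpa [mul_assoc] using this
      have hwK : w ∈ K := hK1 ⟨le_sup_right (a := N) hw, hwM⟩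
      exact K.mul_mem (hNK hn) (K.mul_mem hwK hk)
    · intro k hk
      refine ⟨?_, hKM hk⟩
      obtain ⟨n, hn, z, hz, rfl⟩ := (hNmul Z _).mp (hK2 hk).1
      have hzK : z ∈ K := by
        have : n⁻¹ * (n * z) ∈ K := K.mul_mem (K.inv_mem (hNK hn)) hk
        simpa using this
      exact Subgroup.mul_mem _ (le_sup_left (b := (W ⊔ K) ⊓ Z) hn)
        (le_sup_right (a := N) ⟨le_sup_right (a := W) hzK, hz⟩)
  refine ⟨{ toFun := fun H => ⟨(N ⊔ H.1) ⊓ M,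
              inf_le_inf_right M (sup_le_sup_left H.2.1 N),
              inf_le_inf_right M (sup_le_sup_left H.2.2 N),
              hnorm H.1 H.2.1⟩
            invFun := fun K => ⟨(W ⊔ K.1) ⊓ Z, le_inf le_sup_left hWZ, inf_le_right⟩
            left_inv := fun H => Subtype.ext (hA H.1 H.2.1 H.2.2)
            right_inv := fun K => Subtype.ext (hB K.1 K.2.1 K.2.2.1 K.2.2.2)
            map_rel_iff' := ?_ }, fun H => rfl, fun K => rfl⟩
  rintro ⟨H, hWH, hHZ⟩ ⟨H', hWH', hHZ'⟩
  simp only [Equiv.coe_fn_mk, Subtype.mk_le_mk]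
  constructor
  · intro hle
    calc H = (W ⊔ ((N ⊔ H) ⊓ M)) ⊓ Z := (hA H hWH hHZ).symm
    _ ≤ (W ⊔ ((N ⊔ H') ⊓ M)) ⊓ Z := inf_le_inf_right Z (sup_le_sup_left hle W)
    _ = H' := hA H' hWH' hHZ'
  · intro hle
    exact inf_le_inf_right M (sup_le_sup_left hle N)
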